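/- If A and B are subsets of a common well-order with order types satisfying o(A) < ω^α · N and o(B) < ω^β · M for ordinals α, β and positive integers N, M, then o(A ∪ B) < ω^{max(α,β)} · (N + M − 1). -/

import Mathlib

open Ordinal
noncomputable def deg (a : Ordinal) : Ordinal := Ordinal.log omega0 a
noncomputable def oType {ι : Type*} [LinearOrder ι] [WellFoundedLT ι] (S : Set ι) : Ordinal :=
  Ordinal.type (Subrel ((· < ·) : ι → ι → Prop) (· ∈ S))
noncomputable def cnfSum (n : ℕ) (e : Fin n → Ordinal) (c : Fin n → ℕ) : Ordinal :=
  (List.ofFn fun i => omega0 ^ (e i) * (c i)).sum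
noncomputable def omegaSum (o : ℕ → Ordinal) : Ordinal :=
  ⨆ n, (List.ofFn fun i : Fin n => o i).sum

section NatOps

noncomputable def nadd (a b : Ordinal.{u}) : Ordinal.{u} :=
  max (⨆ x : Set.Iio a, Order.succ (nadd x.1 b)) (⨆ x : Set.Iio b, Order.succ (nadd a x.1))
termination_by (a, b)
decreasing_by all_goals cases x; decreasing_tactic
infixl:65 " ♯ " => nadd
theorem nadd_def (a b : Ordinal) : a ♯ b =
    max (⨆ x : Set.Iio a, Order.succ (x.1 ♯ b)) (⨆ x : Set.Iio b, Order.succ (a ♯ x.1)) := by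
  rw [nadd]
theorem nadd_lt_nadd_right {b c : Ordinal} (h : b < c) (a : Ordinal) : b ♯ a < c ♯ a := by
  rw [nadd_def c a]
  exact (Order.lt_succ _).trans_le ((le_ciSup Ordinal.bddAbove_of_small
    (⟨b, h⟩ : Set.Iio c)).trans (le_max_left _ _))
theorem nadd_lt_nadd_left {b c : Ordinal} (h : b < c) (a : Ordinal) : a ♯ b < a ♯ c := by
  rw [nadd_def a c]
  exact (Order.lt_succ _).trans_le ((le_ciSup Ordinal.bddAbove_of_small
    (⟨b, h⟩ : Set.Iio c)).trans (le_max_right _ _))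
theorem nadd_le_nadd_left {b c : Ordinal} (h : b ≤ c) (a : Ordinal) : a ♯ b ≤ a ♯ c := by
  rcases h.eq_or_lt with rfl | h
  · exact le_rfl
  · exact (nadd_lt_nadd_left h a).le
theorem nadd_le_nadd_right {b c : Ordinal} (h : b ≤ c) (a : Ordinal) : b ♯ a ≤ c ♯ a := by
  rcases h.eq_or_lt with rfl | h
  · exact le_rfl
  · exact (nadd_lt_nadd_right h a).le
theorem nadd_lt_nadd_of_lt_of_le {a b c d : Ordinal} (h₁ : a < b) (h₂ : c ≤ d) : a ♯ c < b ♯ d :=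
  (nadd_lt_nadd_right h₁ c).trans_le (nadd_le_nadd_left h₂ b)
theorem nadd_lt_nadd_of_le_of_lt {a b c d : Ordinal} (h₁ : a ≤ b) (h₂ : c < d) : a ♯ c < b ♯ d :=
  (nadd_le_nadd_right h₁ c).trans_lt (nadd_lt_nadd_left h₂ b)
theorem nadd_le_iff {a b c : Ordinal} :
    b ♯ c ≤ a ↔ (∀ b' < b, b' ♯ c < a) ∧ ∀ c' < c, b ♯ c' < a := by
  constructor
  · intro h
    exact ⟨fun b' hb => (nadd_lt_nadd_right hb c).trans_le h,
      fun c' hc => (nadd_lt_nadd_left hc b).trans_le h⟩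
  · rintro ⟨h₁, h₂⟩
    rw [nadd_def]
    exact max_le (ciSup_le' fun x => Order.succ_le_of_lt (h₁ x.1 x.2))
      (ciSup_le' fun x => Order.succ_le_of_lt (h₂ x.1 x.2))
theorem zero_nadd (a : Ordinal) : 0 ♯ a = a := by
  induction a using Ordinal.induction with
  | h a IH =>
  refine le_antisymm (nadd_le_iff.2 ⟨fun b hb => by simp at hb,
    fun c hc => (IH c hc).symm ▸ hc⟩) (le_of_forall_lt fun c hc => ?_)
  rw [← IH c hc]
  exact nadd_lt_nadd_left hc 0
theorem nadd_zero (a : Ordinal) : a ♯ 0 = a := by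
  induction a using Ordinal.induction with
  | h a IH =>
  refine le_antisymm (nadd_le_iff.2 ⟨fun c hc => (IH c hc).symm ▸ hc,
    fun b hb => by simp at hb⟩) (le_of_forall_lt fun c hc => ?_)
  rw [← IH c hc]
  exact nadd_lt_nadd_right hc 0

end NatOps

section SetPart

variable {ι : Type*} [LinearOrder ι] [WellFoundedLT ι]

lemma oType_mono {S T : Set ι} (h : S ⊆ T) : oType S ≤ oType T :=
  RelEmbedding.ordinal_type_le ⟨⟨Set.inclusion h, Set.inclusion_injective h⟩, Iff.rfl⟩

lemma oType_seg_lt {T : Set ι} {x : ι} (hx : x ∈ T) :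
    oType {t ∈ T | t < x} < oType T := by
  refine PrincipalSeg.ordinal_type_lt
    ⟨⟨⟨fun a => ⟨a.1, a.2.1⟩, fun a b hab => ?_⟩, Iff.rfl⟩, ⟨x, hx⟩, fun b => ?_⟩
  · exact Subtype.ext (Subtype.mk_eq_mk.mp hab)
  · constructor
    · rintro ⟨a, rfl⟩; exact a.2.2
    · intro hb; exact ⟨⟨b.1, b.2, hb⟩, rfl⟩

lemma seg_lt_seg {A : Set ι} {x y : ι} (hx : x ∈ A) (hxy : x < y) :
    oType {a ∈ A | a < x} < oType {a ∈ A | a < y} := by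
  have hset : {t ∈ {a ∈ A | a < y} | t < x} = {a ∈ A | a < x} := by
    ext a
    constructor
    · rintro ⟨⟨ha, _⟩, h⟩; exact ⟨ha, h⟩
    · rintro ⟨ha, h⟩; exact ⟨⟨ha, h.trans hxy⟩, h⟩
  rw [← hset]
  exact oType_seg_lt ⟨hx, hxy⟩

lemma oType_union_le_nadd (A B : Set ι) :
    oType (A ∪ B) ≤ oType A ♯ oType B := by
  classical
  set f : ι → Ordinal := fun x => oType {a ∈ A | a < x} ♯ oType {b ∈ B | b < x} with hf
  have hbound : ∀ x ∈ A ∪ B, f x < oType A ♯ oType B := by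
    rintro x (hx | hx)
    · exact nadd_lt_nadd_of_lt_of_le (oType_seg_lt hx) (oType_mono (Set.sep_subset _ _))
    · exact nadd_lt_nadd_of_le_of_lt (oType_mono (Set.sep_subset _ _)) (oType_seg_lt hx)
  have hmono : ∀ x y : (A ∪ B : Set ι),
      Subrel ((· < ·) : ι → ι → Prop) (· ∈ A ∪ B) x y → f x.1 < f y.1 := by
    rintro ⟨x, hx⟩ ⟨y, hy⟩ (hxy : x < y)
    rcases hx with hx | hx
    · exact nadd_lt_nadd_of_lt_of_le (seg_lt_seg hx hxy)
        (oType_mono fun a ha => ⟨ha.1, ha.2.trans hxy⟩)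
    · exact nadd_lt_nadd_of_le_of_lt
        (oType_mono fun a ha => ⟨ha.1, ha.2.trans hxy⟩) (seg_lt_seg hx hxy)
  set c := oType A ♯ oType B with hc
  let g : (A ∪ B : Set ι) → c.ToType := fun z => Ordinal.ToType.mk (o := c) ⟨f z.1, hbound z.1 z.2⟩
  have hg : ∀ a b, Subrel ((· < ·) : ι → ι → Prop) (· ∈ A ∪ B) a b → g a < g b := by
    intro a b h
    exact (Ordinal.ToType.mk (o := c)).lt_iff_lt.2 (Subtype.mk_lt_mk.2 (hmono a b h))
  haveI : IsWellOrder c.ToType (· < ·) := isWellOrder_lt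
  have := RelEmbedding.ordinal_type_le (RelEmbedding.ofMonotone g hg)
  rw [type_toType] at this
  exact this

end SetPart

section Arith

lemma nadd_cnf_le (γ : Ordinal)
    (hP : ∀ u v, u < omega0 ^ γ → v < omega0 ^ γ → u ♯ v < omega0 ^ γ) :
    ∀ (k : ℕ) (t : Ordinal) (q q' : ℕ) (r s : Ordinal), q + q' ≤ k → r < omega0 ^ γ →
      s < omega0 ^ γ → r ♯ s ≤ t →
      (omega0 ^ γ * q + r) ♯ (omega0 ^ γ * q' + s) ≤ omega0 ^ γ * (((q + q' : ℕ) : Ordinal)) + (r ♯ s) := by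
  intro k
  induction k using Nat.strong_induction_on with
  | _ k IHk =>
  intro t
  induction t using Ordinal.induction with
  | h t IHt =>
  intro q q' r s hk hr hs ht
  have hω : omega0 ^ γ ≠ 0 := (opow_pos γ omega0_pos).ne'
  rw [nadd_le_iff]
  constructor
  · intro x' hx'
    rcases lt_or_ge x' (omega0 ^ γ * q) with hcase | hcase
    · have hdiv : x' / (omega0 ^ γ) < (q : Ordinal) := (div_lt hω).2 hcase
      obtain ⟨a, ha⟩ := lt_omega0.1 (hdiv.trans (nat_lt_omega0 q))
      have haq : a < q := by exact_mod_cast ha ▸ hdiv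
      have hx'' : x' = omega0 ^ γ * a + x' % (omega0 ^ γ) := by
        rw [← ha, Ordinal.div_add_mod]
      have hr'' : x' % (omega0 ^ γ) < omega0 ^ γ := mod_lt x' hω
      have hIH := IHk (a + q') (by omega) (x' % (omega0 ^ γ) ♯ s) a q' (x' % (omega0 ^ γ)) s
        le_rfl hr'' hs le_rfl
      calc x' ♯ (omega0 ^ γ * q' + s)
          ≤ omega0 ^ γ * (((a + q' : ℕ) : Ordinal)) + (x' % (omega0 ^ γ) ♯ s) := by
            conv_lhs => rw [hx'']
            exact hIH
        _ < omega0 ^ γ * (((a + q' : ℕ) : Ordinal)) + omega0 ^ γ := (add_lt_add_iff_left _).2 (hP _ _ hr'' hs)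
        _ = omega0 ^ γ * (((a + q' + 1 : ℕ) : Ordinal)) := by
            push_cast [mul_add, mul_one]; rfl
        _ ≤ omega0 ^ γ * (((q + q' : ℕ) : Ordinal)) := mul_le_mul_right (by exact_mod_cast (by omega : a + q' + 1 ≤ q + q')) _
        _ ≤ omega0 ^ γ * (((q + q' : ℕ) : Ordinal)) + (r ♯ s) := le_self_add
    · set r' := x' - omega0 ^ γ * q with hr'def
      have hx'' : x' = omega0 ^ γ * q + r' := (Ordinal.add_sub_cancel_of_le hcase).symm
      have hr'r : r' < r := by
        rw [hx''] at hx'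
        exact (add_lt_add_iff_left _).1 hx'
      have hIH := IHt (r' ♯ s) (lt_of_lt_of_le (nadd_lt_nadd_right hr'r s) ht)
        q q' r' s hk (hr'r.trans hr) hs le_rfl
      calc x' ♯ (omega0 ^ γ * q' + s)
          ≤ omega0 ^ γ * (((q + q' : ℕ) : Ordinal)) + (r' ♯ s) := by rw [hx'']; exact hIH
        _ < omega0 ^ γ * (((q + q' : ℕ) : Ordinal)) + (r ♯ s) := (add_lt_add_iff_left _).2 (nadd_lt_nadd_right hr'r s)
  · intro y' hy'
    rcases lt_or_ge y' (omega0 ^ γ * q') with hcase | hcase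
    · have hdiv : y' / (omega0 ^ γ) < (q' : Ordinal) := (div_lt hω).2 hcase
      obtain ⟨b, hb⟩ := lt_omega0.1 (hdiv.trans (nat_lt_omega0 q'))
      have hbq : b < q' := by exact_mod_cast hb ▸ hdiv
      have hy'' : y' = omega0 ^ γ * b + y' % (omega0 ^ γ) := by
        rw [← hb, Ordinal.div_add_mod]
      have hs'' : y' % (omega0 ^ γ) < omega0 ^ γ := mod_lt y' hω
      have hIH := IHk (q + b) (by omega) (r ♯ y' % (omega0 ^ γ)) q b r (y' % (omega0 ^ γ))
        le_rfl hr hs'' le_rfl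
      calc (omega0 ^ γ * q + r) ♯ y'
          ≤ omega0 ^ γ * (((q + b : ℕ) : Ordinal)) + (r ♯ y' % (omega0 ^ γ)) := by
            conv_lhs => rw [hy'']
            exact hIH
        _ < omega0 ^ γ * (((q + b : ℕ) : Ordinal)) + omega0 ^ γ := (add_lt_add_iff_left _).2 (hP _ _ hr hs'')
        _ = omega0 ^ γ * (((q + b + 1 : ℕ) : Ordinal)) := by
            push_cast [mul_add, mul_one]; rfl
        _ ≤ omega0 ^ γ * (((q + q' : ℕ) : Ordinal)) := mul_le_mul_right (by exact_mod_cast (by omega : q + b + 1 ≤ q + q')) _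
        _ ≤ omega0 ^ γ * (((q + q' : ℕ) : Ordinal)) + (r ♯ s) := le_self_add
    · set s' := y' - omega0 ^ γ * q' with hs'def
      have hy'' : y' = omega0 ^ γ * q' + s' := (Ordinal.add_sub_cancel_of_le hcase).symm
      have hs's : s' < s := by
        rw [hy''] at hy'
        exact (add_lt_add_iff_left _).1 hy'
      have hIH := IHt (r ♯ s') (lt_of_lt_of_le (nadd_lt_nadd_left hs's r) ht)
        q q' r s' hk hr (hs's.trans hs) le_rfl
      calc (omega0 ^ γ * q + r) ♯ y'
          ≤ omega0 ^ γ * (((q + q' : ℕ) : Ordinal)) + (r ♯ s') := by rw [hy'']; exact hIH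
        _ < omega0 ^ γ * (((q + q' : ℕ) : Ordinal)) + (r ♯ s) := (add_lt_add_iff_left _).2 (nadd_lt_nadd_left hs's r)

lemma nadd_principal : ∀ γ : Ordinal, ∀ u v, u < omega0 ^ γ → v < omega0 ^ γ →
    u ♯ v < omega0 ^ γ := by
  intro γ
  induction γ using Ordinal.induction with
  | h γ IH =>
  intro u v hu hv
  rcases eq_or_ne u 0 with rfl | hu0
  · rwa [zero_nadd]
  rcases eq_or_ne v 0 with rfl | hv0
  · rwa [nadd_zero]
  set δ := max (log omega0 u) (log omega0 v) with hδ
  have hδγ : δ < γ := max_lt ((lt_opow_iff_log_lt one_lt_omega0 hu0).1 hu)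
    ((lt_opow_iff_log_lt one_lt_omega0 hv0).1 hv)
  have hωδ : omega0 ^ δ ≠ 0 := (opow_pos δ omega0_pos).ne'
  have hu' : u < omega0 ^ δ * omega0 := by
    rw [← opow_succ]
    exact (lt_opow_succ_log_self one_lt_omega0 u).trans_le
      (opow_le_opow_right omega0_pos (Order.succ_le_succ (le_max_left _ _)))
  have hv' : v < omega0 ^ δ * omega0 := by
    rw [← opow_succ]
    exact (lt_opow_succ_log_self one_lt_omega0 v).trans_le
      (opow_le_opow_right omega0_pos (Order.succ_le_succ (le_max_right _ _)))
  obtain ⟨n, hn⟩ := lt_omega0.1 ((div_lt hωδ).2 hu')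
  obtain ⟨m, hm⟩ := lt_omega0.1 ((div_lt hωδ).2 hv')
  have hud : u = omega0 ^ δ * n + u % (omega0 ^ δ) := by rw [← hn, Ordinal.div_add_mod]
  have hvd : v = omega0 ^ δ * m + v % (omega0 ^ δ) := by rw [← hm, Ordinal.div_add_mod]
  have hur : u % (omega0 ^ δ) < omega0 ^ δ := mod_lt u hωδ
  have hvr : v % (omega0 ^ δ) < omega0 ^ δ := mod_lt v hωδ
  have hmain := nadd_cnf_le δ (fun a b ha hb => IH δ hδγ a b ha hb) (n + m)
    (u % (omega0 ^ δ) ♯ v % (omega0 ^ δ)) n m (u % (omega0 ^ δ)) (v % (omega0 ^ δ))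
    le_rfl hur hvr le_rfl
  rw [← hud, ← hvd] at hmain
  calc u ♯ v ≤ omega0 ^ δ * (((n + m : ℕ) : Ordinal)) + (u % (omega0 ^ δ) ♯ v % (omega0 ^ δ)) := hmain
    _ < omega0 ^ δ * (((n + m : ℕ) : Ordinal)) + omega0 ^ δ := (add_lt_add_iff_left _).2 (IH δ hδγ _ _ hur hvr)
    _ = omega0 ^ δ * (((n + m + 1 : ℕ) : Ordinal)) := by push_cast [mul_add, mul_one]; rfl
    _ < omega0 ^ δ * omega0 := mul_lt_mul_of_pos_left (nat_lt_omega0 _) (opow_pos δ omega0_pos)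
    _ = omega0 ^ (Order.succ δ) := (opow_succ _ _).symm
    _ ≤ omega0 ^ γ := opow_le_opow_right omega0_pos (Order.succ_le_of_lt hδγ)

lemma nadd_lt_bound {γ : Ordinal} {N M : ℕ} (hN : 0 < N) (hM : 0 < M) {x y : Ordinal}
    (hx : x < omega0 ^ γ * N) (hy : y < omega0 ^ γ * M) :
    x ♯ y < omega0 ^ γ * (((N + M - 1 : ℕ) : Ordinal)) := by
  have hω : omega0 ^ γ ≠ 0 := (opow_pos γ omega0_pos).ne'
  obtain ⟨q, hq⟩ := lt_omega0.1 (((div_lt hω).2 hx).trans (nat_lt_omega0 N))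
  obtain ⟨q', hq'⟩ := lt_omega0.1 (((div_lt hω).2 hy).trans (nat_lt_omega0 M))
  have hqN : q < N := by exact_mod_cast hq ▸ (div_lt hω).2 hx
  have hq'M : q' < M := by exact_mod_cast hq' ▸ (div_lt hω).2 hy
  have hxd : x = omega0 ^ γ * q + x % (omega0 ^ γ) := by rw [← hq, Ordinal.div_add_mod]
  have hyd : y = omega0 ^ γ * q' + y % (omega0 ^ γ) := by rw [← hq', Ordinal.div_add_mod]
  have hxr : x % (omega0 ^ γ) < omega0 ^ γ := mod_lt x hω
  have hyr : y % (omega0 ^ γ) < omega0 ^ γ := mod_lt y hω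
  have hmain := nadd_cnf_le γ (nadd_principal γ) (q + q')
    (x % (omega0 ^ γ) ♯ y % (omega0 ^ γ)) q q' (x % (omega0 ^ γ)) (y % (omega0 ^ γ))
    le_rfl hxr hyr le_rfl
  rw [← hxd, ← hyd] at hmain
  calc x ♯ y ≤ omega0 ^ γ * (((q + q' : ℕ) : Ordinal)) + (x % (omega0 ^ γ) ♯ y % (omega0 ^ γ)) := hmain
    _ < omega0 ^ γ * (((q + q' : ℕ) : Ordinal)) + omega0 ^ γ := (add_lt_add_iff_left _).2 (nadd_principal γ _ _ hxr hyr)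
    _ = omega0 ^ γ * (((q + q' + 1 : ℕ) : Ordinal)) := by push_cast [mul_add, mul_one]; rfl
    _ ≤ omega0 ^ γ * (((N + M - 1 : ℕ) : Ordinal)) := mul_le_mul_right (Nat.cast_le.2 (by omega)) _

end Arith

theorem union_lt_bound {ι : Type*} [LinearOrder ι] [WellFoundedLT ι]
    (A B : Set ι) (α β : Ordinal) (N M : ℕ) (hN : 0 < N) (hM : 0 < M)
    (hA : oType A < omega0 ^ α * N) (hB : oType B < omega0 ^ β * M) :
    oType (A ∪ B) < omega0 ^ (max α β) * (N + M - 1) := by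
  have hA' : oType A < omega0 ^ (max α β) * N :=
    hA.trans_le (mul_le_mul_left (opow_le_opow_right omega0_pos (le_max_left _ _)) _)
  have hB' : oType B < omega0 ^ (max α β) * M :=
    hB.trans_le (mul_le_mul_left (opow_le_opow_right omega0_pos (le_max_right _ _)) _)
  have h := nadd_lt_bound hN hM hA' hB'
  have hcast : ((N + M - 1 : ℕ) : Ordinal) = (N : Ordinal) + (M : Ordinal) - 1 := by
    rw [Ordinal.natCast_sub, Nat.cast_add, Nat.cast_one]
  rw [← hcast]
  exact (oType_union_le_nadd A B).trans_lt h
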